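/- Let n ≥ 1, ε > 0, let U ⊆ ℝⁿ be open, let H : ℝⁿ → ℝ be continuously differentiable, and let u : U → ℝ be three times continuously differentiable and satisfy H(∇u(x)) = ε Δu(x) for every x ∈ U. Then the function w(x) := |∇u(x)|²/2 satisfies, at every x ∈ U, the identity ∇H(∇u(x)) · ∇w(x) = ε Δw(x) − ε |D²u(x)|². -/

import Mathlib

open scoped RealInnerProductSpace

/-- The second partial derivative ∂²u/∂xᵢ∂xₖ of `u` at `x`. -/
noncomputable def pd2 {n : ℕ} (u : EuclideanSpace ℝ (Fin n) → ℝ)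
    (x : EuclideanSpace ℝ (Fin n)) (i k : Fin n) : ℝ :=
  fderiv ℝ (fun y => fderiv ℝ u y (EuclideanSpace.single k 1)) x (EuclideanSpace.single i 1)

/-- The Laplacian of `u` at `x`: the sum of the second partial derivatives ∂²u/∂xᵢ². -/
noncomputable def lap {n : ℕ} (u : EuclideanSpace ℝ (Fin n) → ℝ)
    (x : EuclideanSpace ℝ (Fin n)) : ℝ :=
  ∑ i, pd2 u x i i


/-- |D²u(x)|² : the sum over all i, k of (∂²u/∂xᵢ∂xₖ)². -/
noncomputable def hessSq {n : ℕ} (u : EuclideanSpace ℝ (Fin n) → ℝ)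
    (x : EuclideanSpace ℝ (Fin n)) : ℝ :=
  ∑ i, ∑ k, (pd2 u x i k) ^ 2

section Aux

variable {n : ℕ}
local notation "E" => EuclideanSpace ℝ (Fin n)

/-- The `i`-th standard basis vector. -/
noncomputable abbrev ee (n : ℕ) (i : Fin n) : EuclideanSpace ℝ (Fin n) :=
  EuclideanSpace.single i 1

/-- Third partial derivative ∂_a ∂_b ∂_c u. -/
noncomputable def pd3 {n : ℕ} (u : EuclideanSpace ℝ (Fin n) → ℝ)
    (x : EuclideanSpace ℝ (Fin n)) (a b c : Fin n) : ℝ :=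
  fderiv ℝ (fun y => pd2 u y b c) x (EuclideanSpace.single a 1)

lemma toDualSymm_coord (L : EuclideanSpace ℝ (Fin n) →L[ℝ] ℝ) (k : Fin n) :
    ((InnerProductSpace.toDual ℝ (EuclideanSpace ℝ (Fin n))).symm L) k
      = L (EuclideanSpace.single k 1) := by
  rw [← InnerProductSpace.toDual_symm_apply (y := L) (x := EuclideanSpace.single k 1)]
  rw [EuclideanSpace.inner_single_right]
  simp

lemma grad_coord (f : E → ℝ) (x : E) (i : Fin n) :
    gradient f x i = fderiv ℝ f x (EuclideanSpace.single i 1) := toDualSymm_coord _ i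

lemma fderiv_eq_inner_grad (f : E → ℝ) (x : E) (v : E) :
    fderiv ℝ f x v = ⟪gradient f x, v⟫ := by
  rw [gradient, InnerProductSpace.toDual_symm_apply]

lemma inner_sum' (a b : E) : ⟪a, b⟫ = ∑ i, a i * b i := by
  simp [PiLp.inner_apply, RCLike.inner_apply, mul_comm]

lemma cd_q {f : E → ℝ} {y : E} (hf : ContDiffAt ℝ 2 f y) (k : Fin n) :
    ContDiffAt ℝ 1 (fun z => fderiv ℝ f z (EuclideanSpace.single k 1)) y :=
  (hf.fderiv_right (by norm_num)).clm_apply contDiffAt_const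

lemma pd2_eq_snd {f : E → ℝ} {y : E} (hf : ContDiffAt ℝ 2 f y) (i k : Fin n) :
    pd2 f y i k = fderiv ℝ (fderiv ℝ f) y (EuclideanSpace.single i 1)
      (EuclideanSpace.single k 1) := by
  have hd : DifferentiableAt ℝ (fderiv ℝ f) y :=
    ((hf.fderiv_right (m := 1) (by norm_num))).differentiableAt one_ne_zero
  have h : fderiv ℝ (fun z => fderiv ℝ f z (EuclideanSpace.single k 1)) y
      = (fderiv ℝ (fderiv ℝ f) y).flip (EuclideanSpace.single k 1) := by
    have := fderiv_clm_apply (c := fderiv ℝ f)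
      (u := fun _ => (EuclideanSpace.single k 1 : EuclideanSpace ℝ (Fin n))) hd
      (differentiableAt_const _)
    simpa using this
  show fderiv ℝ (fun z => fderiv ℝ f z (EuclideanSpace.single k 1)) y
      (EuclideanSpace.single i 1) = _
  rw [h]; rfl

lemma pd2_symm {f : E → ℝ} {y : E} (hf : ContDiffAt ℝ 2 f y) (i k : Fin n) :
    pd2 f y i k = pd2 f y k i := by
  rw [pd2_eq_snd hf, pd2_eq_snd hf]
  exact hf.isSymmSndFDerivAt (by simp) _ _

lemma cd_pd2fn {f : E → ℝ} {y : E} (hf : ContDiffAt ℝ 3 f y) (i k : Fin n) :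
    ContDiffAt ℝ 1 (fun z => pd2 f z i k) y := by
  have h2 : ContDiffAt ℝ 2 (fun z => fderiv ℝ f z (EuclideanSpace.single k 1)) y :=
    (hf.fderiv_right (m := 2) (by norm_num)).clm_apply contDiffAt_const
  exact (h2.fderiv_right (m := 1) (by norm_num)).clm_apply contDiffAt_const

lemma pd3_symm12 {f : E → ℝ} {y : E} (hf : ContDiffAt ℝ 3 f y) (a b c : Fin n) :
    pd3 f y a b c = pd3 f y b a c := by
  have h2 : ContDiffAt ℝ 2 (fun z => fderiv ℝ f z (EuclideanSpace.single c 1)) y :=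
    (hf.fderiv_right (m := 2) (by norm_num)).clm_apply contDiffAt_const
  exact pd2_symm h2 a b

noncomputable def dIsoE (n : ℕ) :
    StrongDual ℝ (EuclideanSpace ℝ (Fin n)) ≃ₗᵢ[ℝ] EuclideanSpace ℝ (Fin n) :=
  (InnerProductSpace.toDual ℝ _).symm

noncomputable def dIso (n : ℕ) :
    StrongDual ℝ (EuclideanSpace ℝ (Fin n)) →L[ℝ] EuclideanSpace ℝ (Fin n) :=
  (dIsoE n).toContinuousLinearEquiv.toContinuousLinearMap

lemma dIso_apply (L : StrongDual ℝ (EuclideanSpace ℝ (Fin n))) :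
    dIso n L = (InnerProductSpace.toDual ℝ (EuclideanSpace ℝ (Fin n))).symm L := rfl

lemma grad_hasFDerivAt {u : E → ℝ} {y : E} (h : ContDiffAt ℝ 2 u y) :
    HasFDerivAt (fun z => gradient u z)
      ((dIso n).comp (fderiv ℝ (fderiv ℝ u) y)) y := by
  have h1 : HasFDerivAt (fderiv ℝ u) (fderiv ℝ (fderiv ℝ u) y) y :=
    (((h.fderiv_right (m := 1) (by norm_num))).differentiableAt one_ne_zero).hasFDerivAt
  exact ((dIso n).hasFDerivAt).comp y h1

end Aux

theorem stmt8 (n : ℕ) (hn : 1 ≤ n) (ε : ℝ) (hε : 0 < ε)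
    (U : Set (EuclideanSpace ℝ (Fin n))) (hUopen : IsOpen U)
    (H : EuclideanSpace ℝ (Fin n) → ℝ) (hH : ContDiff ℝ 1 H)
    (u : EuclideanSpace ℝ (Fin n) → ℝ) (hu : ContDiffOn ℝ 3 u U)
    (heq : ∀ x ∈ U, H (gradient u x) = ε * lap u x) :
    ∀ x ∈ U,
      ⟪gradient H (gradient u x), gradient (fun y => ‖gradient u y‖ ^ 2 / 2) x⟫
      = ε * lap (fun y => ‖gradient u y‖ ^ 2 / 2) x - ε * hessSq u x := by
  intro x hx
  have hu3 : ∀ ⦃y⦄, y ∈ U → ContDiffAt ℝ 3 u y :=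
    fun y hy => hu.contDiffAt (hUopen.mem_nhds hy)
  have hu2 : ∀ ⦃y⦄, y ∈ U → ContDiffAt ℝ 2 u y :=
    fun y hy => (hu3 hy).of_le (by norm_num)
  -- derivative of w = ‖∇u‖²/2 on U
  have hwF : ∀ y ∈ U, HasFDerivAt (fun z => ‖gradient u z‖ ^ 2 / 2)
      (∑ k, (2⁻¹ : ℝ) • ((fderiv ℝ u y (EuclideanSpace.single k 1)) •
          fderiv ℝ (fun z => fderiv ℝ u z (EuclideanSpace.single k 1)) y
        + (fderiv ℝ u y (EuclideanSpace.single k 1)) •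
          fderiv ℝ (fun z => fderiv ℝ u z (EuclideanSpace.single k 1)) y)) y := by
    intro y hy
    have hqd : ∀ k : Fin n, HasFDerivAt (fun z => fderiv ℝ u z (EuclideanSpace.single k 1))
        (fderiv ℝ (fun z => fderiv ℝ u z (EuclideanSpace.single k 1)) y) y :=
      fun k => ((cd_q (hu2 hy) k).differentiableAt one_ne_zero).hasFDerivAt
    have hsum := HasFDerivAt.fun_sum (fun k (_ : k ∈ Finset.univ) => ((hqd k).mul (hqd k)).const_mul (2⁻¹ : ℝ))
    have heqfun : (fun z => ‖gradient u z‖ ^ 2 / 2)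
        = fun z => ∑ k, (2⁻¹ : ℝ) * (fderiv ℝ u z (EuclideanSpace.single k 1)
            * fderiv ℝ u z (EuclideanSpace.single k 1)) := by
      funext z
      have h1 : ‖gradient u z‖ ^ 2 = ⟪gradient u z, gradient u z⟫ :=
        (real_inner_self_eq_norm_sq _).symm
      rw [h1, inner_sum']
      rw [Finset.sum_div]
      refine Finset.sum_congr rfl fun k _ => ?_
      rw [grad_coord]
      ring
    rw [heqfun]
    exact hsum
  -- coordinates of the derivative of w
  have hwd : ∀ y ∈ U, ∀ i, fderiv ℝ (fun z => ‖gradient u z‖ ^ 2 / 2) y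
      (EuclideanSpace.single i 1)
      = ∑ k, fderiv ℝ u y (EuclideanSpace.single k 1) * pd2 u y i k := by
    intro y hy i
    rw [(hwF y hy).fderiv]
    simp only [ContinuousLinearMap.coe_sum', Finset.sum_apply, ContinuousLinearMap.coe_smul',
      Pi.smul_apply, ContinuousLinearMap.add_apply, smul_eq_mul]
    refine Finset.sum_congr rfl fun k _ => ?_
    rw [show fderiv ℝ (fun z => fderiv ℝ u z (EuclideanSpace.single k 1)) y
        (EuclideanSpace.single i 1) = pd2 u y i k from rfl]
    ring
  -- gradient of w in coordinates
  have hgw : ∀ i, gradient (fun y => ‖gradient u y‖ ^ 2 / 2) x i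
      = ∑ k, fderiv ℝ u x (EuclideanSpace.single k 1) * pd2 u x i k := by
    intro i
    rw [grad_coord]
    exact hwd x hx i
  -- second derivatives of w
  have hlapw : ∀ i, pd2 (fun y => ‖gradient u y‖ ^ 2 / 2) x i i
      = ∑ k, (pd2 u x i k * pd2 u x i k
          + fderiv ℝ u x (EuclideanSpace.single k 1) * pd3 u x i i k) := by
    intro i
    have hev : (fun z => fderiv ℝ (fun y => ‖gradient u y‖ ^ 2 / 2) z
          (EuclideanSpace.single i 1))
        =ᶠ[nhds x] (fun z => ∑ k, fderiv ℝ u z (EuclideanSpace.single k 1) * pd2 u z i k) :=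
      Filter.eventuallyEq_of_mem (hUopen.mem_nhds hx) fun z hz => hwd z hz i
    have hd1 : ∀ k : Fin n, DifferentiableAt ℝ
        (fun z => fderiv ℝ u z (EuclideanSpace.single k 1)) x :=
      fun k => (cd_q (hu2 hx) k).differentiableAt one_ne_zero
    have hd2 : ∀ k : Fin n, DifferentiableAt ℝ (fun z => pd2 u z i k) x :=
      fun k => (cd_pd2fn (hu3 hx) i k).differentiableAt one_ne_zero
    show fderiv ℝ (fun z => fderiv ℝ (fun y => ‖gradient u y‖ ^ 2 / 2) z
        (EuclideanSpace.single i 1)) x (EuclideanSpace.single i 1) = _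
    rw [hev.fderiv_eq]
    rw [fderiv_fun_sum (A := fun k z => fderiv ℝ u z (EuclideanSpace.single k 1) * pd2 u z i k) (fun k _ => ((hd1 k).mul (hd2 k)))]
    rw [ContinuousLinearMap.sum_apply]
    refine Finset.sum_congr rfl fun k _ => ?_
    rw [fderiv_fun_mul (hd1 k) (hd2 k)]
    simp only [ContinuousLinearMap.add_apply, ContinuousLinearMap.coe_smul',
      Pi.smul_apply, smul_eq_mul]
    rw [show fderiv ℝ (fun z => pd2 u z i k) x (EuclideanSpace.single i 1)
        = pd3 u x i i k from rfl]
    rw [show fderiv ℝ (fun z => fderiv ℝ u z (EuclideanSpace.single k 1)) x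
        (EuclideanSpace.single i 1) = pd2 u x i k from rfl]
    ring
  -- differentiated PDE at x
  have dPDE : ∀ i, (∑ k, gradient H (gradient u x) k * pd2 u x i k)
      = ε * ∑ j, pd3 u x i j j := by
    intro i
    have hEv : (fun z => H (gradient u z)) =ᶠ[nhds x] (fun z => ε * lap u z) :=
      Filter.eventuallyEq_of_mem (hUopen.mem_nhds hx) fun z hz => heq z hz
    have hGx := grad_hasFDerivAt (n := n) (hu2 hx)
    have hHd : HasFDerivAt H (fderiv ℝ H (gradient u x)) (gradient u x) :=
      ((hH.differentiable one_ne_zero) (gradient u x)).hasFDerivAt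
    have hcomp : fderiv ℝ (fun z => H (gradient u z)) x
        = (fderiv ℝ H (gradient u x)).comp ((dIso n).comp (fderiv ℝ (fderiv ℝ u) x)) :=
      (hHd.comp x hGx).fderiv
    have hlapdiff : DifferentiableAt ℝ (fun z => lap u z) x := by
      have : (fun z => lap u z) = fun z => ∑ j, pd2 u z j j := rfl
      rw [this]
      exact DifferentiableAt.fun_sum fun j _ => (cd_pd2fn (hu3 hx) j j).differentiableAt one_ne_zero
    have hlhs : fderiv ℝ (fun z => H (gradient u z)) x (EuclideanSpace.single i 1)
        = ∑ k, gradient H (gradient u x) k * pd2 u x i k := by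
      rw [hcomp]
      rw [ContinuousLinearMap.comp_apply, ContinuousLinearMap.comp_apply]
      rw [fderiv_eq_inner_grad, inner_sum']
      refine Finset.sum_congr rfl fun k _ => ?_
      rw [dIso_apply, toDualSymm_coord]
      rw [← pd2_eq_snd (hu2 hx)]
    have hrhs : fderiv ℝ (fun z => ε * lap u z) x (EuclideanSpace.single i 1)
        = ε * ∑ j, pd3 u x i j j := by
      rw [fderiv_const_mul hlapdiff ε]
      simp only [ContinuousLinearMap.coe_smul', Pi.smul_apply, smul_eq_mul]
      congr 1
      have : (fun z => lap u z) = fun z => ∑ j, pd2 u z j j := rfl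
      rw [this, fderiv_fun_sum (fun j _ => (cd_pd2fn (hu3 hx) j j).differentiableAt one_ne_zero)]
      rw [ContinuousLinearMap.sum_apply]
      rfl
    rw [← hlhs, hEv.fderiv_eq, hrhs]
  -- symmetries
  have hsym2 : ∀ i k, pd2 u x i k = pd2 u x k i := pd2_symm (hu2 hx)
  have hsym3 : ∀ i k, pd3 u x i i k = pd3 u x k i i := by
    intro i k
    have hev : (fun z => pd2 u z i k) =ᶠ[nhds x] (fun z => pd2 u z k i) :=
      Filter.eventuallyEq_of_mem (hUopen.mem_nhds hx) fun z hz => pd2_symm (hu2 hz) i k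
    have e23 : pd3 u x i i k = pd3 u x i k i := by
      show fderiv ℝ (fun z => pd2 u z i k) x (EuclideanSpace.single i 1)
        = fderiv ℝ (fun z => pd2 u z k i) x (EuclideanSpace.single i 1)
      rw [hev.fderiv_eq]
    rw [e23, pd3_symm12 (hu3 hx)]
  -- final assembly
  rw [inner_sum']
  simp only [hgw]
  have hlapw' : lap (fun y => ‖gradient u y‖ ^ 2 / 2) x
      = hessSq u x + ∑ k, fderiv ℝ u x (EuclideanSpace.single k 1) * (∑ i, pd3 u x k i i) := by
    show (∑ i, pd2 (fun y => ‖gradient u y‖ ^ 2 / 2) x i i) = _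
    simp only [hlapw, Finset.sum_add_distrib]
    congr 1
    · rw [hessSq]
      refine Finset.sum_congr rfl fun i _ => Finset.sum_congr rfl fun k _ => ?_
      ring
    · rw [Finset.sum_comm]
      refine Finset.sum_congr rfl fun k _ => ?_
      rw [Finset.mul_sum]
      refine Finset.sum_congr rfl fun i _ => ?_
      rw [hsym3 i k]
  rw [hlapw']
  have hlhs2 : (∑ i, gradient H (gradient u x) i
        * ∑ k, fderiv ℝ u x (EuclideanSpace.single k 1) * pd2 u x i k)
      = ∑ k, fderiv ℝ u x (EuclideanSpace.single k 1)
          * (ε * ∑ j, pd3 u x k j j) := by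
    calc (∑ i, gradient H (gradient u x) i
          * ∑ k, fderiv ℝ u x (EuclideanSpace.single k 1) * pd2 u x i k)
        = ∑ i, ∑ k, fderiv ℝ u x (EuclideanSpace.single k 1)
            * (gradient H (gradient u x) i * pd2 u x k i) := by
          refine Finset.sum_congr rfl fun i _ => ?_
          rw [Finset.mul_sum]
          refine Finset.sum_congr rfl fun k _ => ?_
          rw [hsym2 i k]; ring
      _ = ∑ k, ∑ i, fderiv ℝ u x (EuclideanSpace.single k 1)
            * (gradient H (gradient u x) i * pd2 u x k i) := Finset.sum_comm
      _ = ∑ k, fderiv ℝ u x (EuclideanSpace.single k 1)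
            * (ε * ∑ j, pd3 u x k j j) := by
          refine Finset.sum_congr rfl fun k _ => ?_
          rw [← Finset.mul_sum]
          congr 1
          rw [← dPDE k]
  rw [hlhs2]
  rw [mul_add]
  rw [Finset.mul_sum]
  have : ∀ k ∈ Finset.univ, fderiv ℝ u x (EuclideanSpace.single k 1) * (ε * ∑ j, pd3 u x k j j)
      = ε * (fderiv ℝ u x (EuclideanSpace.single k 1) * ∑ i, pd3 u x k i i) :=
    fun k _ => by ring
  rw [Finset.sum_congr rfl this]
  ring
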